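/- Line–circle continuity holds in the plane over a Euclidean field: let F be a linearly ordered field in which every nonnegative element is a square. Let u ∈ F × F, let r ∈ F with 0 ≤ r, and let a, b ∈ F × F satisfy d²(a,u) ≤ r² (a is non-strictly inside the circle of center u and radius r) and r² ≤ d²(b,u) (b is non-strictly outside it). Then there exists t ∈ F with 0 ≤ t ≤ 1 such that the point a + t • (b − a) satisfies d²(a + t • (b − a), u) = r², i.e. the segment from a to b meets the circle. -/

import Mathlib

set_option maxHeartbeats 1000000 in


/-- Line–circle continuity holds in the plane over a Euclidean field. -/
theorem line_circle_continuity (F : Type*) [Field F] [LinearOrder F] [IsStrictOrderedRing F]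
    (hsq : ∀ x : F, 0 ≤ x → ∃ y : F, y * y = x)
    (u : F × F) (r : F) (hr : 0 ≤ r)
    (a b : F × F)
    (ha_in : (a.1 - u.1) ^ 2 + (a.2 - u.2) ^ 2 ≤ r ^ 2)
    (hb_out : r ^ 2 ≤ (b.1 - u.1) ^ 2 + (b.2 - u.2) ^ 2) :
    ∃ t : F, 0 ≤ t ∧ t ≤ 1 ∧
      ((a + t • (b - a)).1 - u.1) ^ 2 + ((a + t • (b - a)).2 - u.2) ^ 2 = r ^ 2 := by
  set p1 := a.1 - u.1 with hp1
  set p2 := a.2 - u.2 with hp2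
  set v1 := b.1 - a.1 with hv1
  set v2 := b.2 - a.2 with hv2
  set A := v1 ^ 2 + v2 ^ 2 with hA
  set B := 2 * (p1 * v1 + p2 * v2) with hB
  set C := p1 ^ 2 + p2 ^ 2 - r ^ 2 with hC
  have hgoal : ∀ t : F, ((a + t • (b - a)).1 - u.1) ^ 2 + ((a + t • (b - a)).2 - u.2) ^ 2
      = A * t ^ 2 + B * t + (C + r ^ 2) := by
    intro t
    simp only [Prod.fst_add, Prod.snd_add, Prod.smul_fst, Prod.smul_snd, Prod.fst_sub,
      Prod.snd_sub, smul_eq_mul, hA, hB, hC, hp1, hp2, hv1, hv2]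
    ring
  have hC0 : C ≤ 0 := by simp only [hC]; linarith
  have hf1 : 0 ≤ A + B + C := by
    have hb1 : b.1 - u.1 = p1 + v1 := by simp [hp1, hv1]
    have hb2 : b.2 - u.2 = p2 + v2 := by simp [hp2, hv2]
    have h := hb_out
    rw [hb1, hb2] at h
    simp only [hA, hB, hC]; nlinarith
  have hAnn : 0 ≤ A := by positivity
  have hCS : B ^ 2 ≤ 4 * A * (C + r ^ 2) := by
    simp only [hA, hB, hC]
    nlinarith [sq_nonneg (p1 * v2 - p2 * v1)]
  have hCr : 0 ≤ C + r ^ 2 := by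
    simp only [hC]
    nlinarith [sq_nonneg p1, sq_nonneg p2]
  clear_value p1 p2 v1 v2 A B C
  rcases eq_or_lt_of_le hAnn with hA0 | hApos
  · refine ⟨0, le_refl _, zero_le_one, ?_⟩
    rw [hgoal 0]
    have hB2 : B ^ 2 ≤ 0 := by nlinarith
    have hB0 : B = 0 := pow_eq_zero_iff two_ne_zero |>.mp (le_antisymm hB2 (sq_nonneg B))
    have hCz : C = 0 := by linarith
    rw [hB0, hCz]; ring
  · have hD : 0 ≤ B ^ 2 - 4 * A * C := by nlinarith
    obtain ⟨y, hy⟩ := hsq _ hD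
    set s := |y| with hs
    have hs2 : s * s = B ^ 2 - 4 * A * C := by rw [hs, abs_mul_abs_self]; exact hy
    have hsnn : 0 ≤ s := abs_nonneg y
    have h2A : (2 * A) ≠ 0 := by positivity
    refine ⟨(s - B) / (2 * A), ?_, ?_, ?_⟩
    · apply div_nonneg _ (by linarith)
      nlinarith
    · rw [div_le_one (by linarith)]
      nlinarith
    · rw [hgoal]
      have key : A * ((s - B) / (2 * A)) ^ 2 + B * ((s - B) / (2 * A)) + C = 0 := by
        field_simp
        linear_combination hs2
      linarith [key]
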